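/- Let W ∼ N(0,1) independent of V ∼ (1/2)N(−s,1) + (1/2)N(s,1), F(α,β) = E[V·tanh(αV + βW)], and f(α) = F(α,0). Then for α ≥ 0 and β ≥ 0, f(α) − (1 + s²)·α·β² ≤ F(α,β) ≤ f(α). -/

import Mathlib

open MeasureTheory ProbabilityTheory
open scoped ENNReal

/-- The symmetric two-component Gaussian mixture `(1/2)N(−s,1) + (1/2)N(s,1)`. -/
noncomputable def mixG (s : ℝ) : Measure ℝ :=
  (1 / 2 : ℝ≥0∞) • gaussianReal (-s) 1 + (1 / 2 : ℝ≥0∞) • gaussianReal s 1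

/-- `F(α,β) = E[V·tanh(αV + βW)]` with `V ∼ mixG s` independent of `W ∼ N(0,1)`. -/
noncomputable def Fmap (s α β : ℝ) : ℝ :=
  ∫ p : ℝ × ℝ, p.1 * Real.tanh (α * p.1 + β * p.2)
    ∂((mixG s).prod (gaussianReal 0 1))

/-- `G(α,β) = E[W·tanh(αV + βW)]` with `V ∼ mixG s` independent of `W ∼ N(0,1)`. -/
noncomputable def Gmap (s α β : ℝ) : ℝ :=
  ∫ p : ℝ × ℝ, p.2 * Real.tanh (α * p.1 + β * p.2)
    ∂((mixG s).prod (gaussianReal 0 1))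



section StmtAux

open Real


lemma sinh_nonneg' {x : ℝ} (hx : 0 ≤ x) : 0 ≤ Real.sinh x := Real.sinh_nonneg_iff.2 hx

lemma tanh_le_self {x : ℝ} (hx : 0 ≤ x) : Real.tanh x ≤ x := by
  have key : Real.sinh x ≤ x * Real.cosh x := by
    have mono : MonotoneOn (fun y : ℝ => y * Real.cosh y - Real.sinh y) (Set.Ici 0) := by
      have hd : ∀ y : ℝ, HasDerivAt (fun y : ℝ => y * Real.cosh y - Real.sinh y)
          (y * Real.sinh y) y := by
        intro y
        have h1 := ((hasDerivAt_id y).mul (Real.hasDerivAt_cosh y)).sub (Real.hasDerivAt_sinh y)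
        refine h1.congr_deriv ?_
        simp only [id_eq, one_mul]; ring
      apply monotoneOn_of_deriv_nonneg (convex_Ici 0)
        (Continuous.continuousOn (by continuity))
      · intro y hy
        exact ((hd y).differentiableAt).differentiableWithinAt
      · intro y hy
        rw [(hd y).deriv]
        have : 0 < y := by simpa using hy
        exact mul_nonneg this.le (sinh_nonneg' this.le)
    have := mono (Set.self_mem_Ici) (Set.mem_Ici.2 hx) hx
    simpa using this
  rw [Real.tanh_eq_sinh_div_cosh, div_le_iff₀ (Real.cosh_pos x)]
  exact key

lemma tanh_nonneg' {x : ℝ} (hx : 0 ≤ x) : 0 ≤ Real.tanh x := by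
  rw [Real.tanh_eq_sinh_div_cosh]
  exact div_nonneg (sinh_nonneg' hx) (Real.cosh_pos x).le

lemma mul_tanh_nonneg (α v : ℝ) (hα : 0 ≤ α) : 0 ≤ v * Real.tanh (α * v) := by
  rcases le_or_gt 0 v with hv | hv
  · exact mul_nonneg hv (tanh_nonneg' (mul_nonneg hα hv))
  · have h0 : 0 ≤ Real.tanh (-(α * v)) := tanh_nonneg' (by nlinarith)
    rw [Real.tanh_neg] at h0
    nlinarith

lemma mul_tanh_le (α v : ℝ) (hα : 0 ≤ α) : v * Real.tanh (α * v) ≤ α * v ^ 2 := by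
  rcases le_or_gt 0 v with hv | hv
  · have h1 : Real.tanh (α * v) ≤ α * v := tanh_le_self (mul_nonneg hα hv)
    nlinarith
  · have h1 : Real.tanh (-(α * v)) ≤ -(α * v) := tanh_le_self (by nlinarith)
    rw [Real.tanh_neg] at h1
    nlinarith

lemma sinh_sq_le (h : ℝ) : Real.sinh h ^ 2 ≤ h ^ 2 * Real.cosh h ^ 2 := by
  have key : ∀ y : ℝ, 0 ≤ y → Real.sinh y ^ 2 ≤ y ^ 2 * Real.cosh y ^ 2 := by
    intro y hy
    have h1 : Real.tanh y ≤ y := tanh_le_self hy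
    have h2 : 0 ≤ Real.tanh y := tanh_nonneg' hy
    have h3 : Real.tanh y ^ 2 ≤ y ^ 2 := by nlinarith
    have h4 : Real.sinh y = Real.tanh y * Real.cosh y := by
      rw [Real.tanh_eq_sinh_div_cosh]; field_simp
    calc Real.sinh y ^ 2 = Real.tanh y ^ 2 * Real.cosh y ^ 2 := by rw [h4]; ring
      _ ≤ y ^ 2 * Real.cosh y ^ 2 := mul_le_mul_of_nonneg_right h3 (sq_nonneg _)
  rcases le_or_gt 0 h with hh | hh
  · exact key h hh
  · have := key (-h) (by linarith)
    simpa using this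


lemma tanh_id_key (x h : ℝ) :
    Real.tanh (x + h) + Real.tanh (x - h)
      = 2 * Real.tanh x * Real.cosh x ^ 2 / (Real.cosh x ^ 2 + Real.sinh h ^ 2) := by
  have c1 : Real.cosh (x + h) ≠ 0 := (Real.cosh_pos _).ne'
  have c2 : Real.cosh (x - h) ≠ 0 := (Real.cosh_pos _).ne'
  have c3 : Real.cosh x ≠ 0 := (Real.cosh_pos _).ne'
  have c4 : Real.cosh x ^ 2 + Real.sinh h ^ 2 ≠ 0 := by positivity
  rw [Real.tanh_eq_sinh_div_cosh, Real.tanh_eq_sinh_div_cosh, Real.tanh_eq_sinh_div_cosh]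
  rw [Real.sinh_add, Real.cosh_add, Real.sinh_sub, Real.cosh_sub] at *
  have c1' : Real.cosh h * Real.cosh x + Real.sinh x * Real.sinh h ≠ 0 := by
    rwa [mul_comm (Real.cosh h)]
  have c2' : Real.cosh h * Real.cosh x - Real.sinh x * Real.sinh h ≠ 0 := by
    rwa [mul_comm (Real.cosh h)]
  field_simp
  linear_combination (2*Real.sinh x*Real.cosh x*Real.sinh h^2) * Real.cosh_sq h
    - (2*Real.sinh x*Real.cosh x*Real.sinh h^2) * Real.cosh_sq x

lemma pointwise_bounds (α v h : ℝ) (hα : 0 ≤ α) :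
    0 ≤ 2 * (v * Real.tanh (α * v)) - v * Real.tanh (α * v + h) - v * Real.tanh (α * v - h)
    ∧ 2 * (v * Real.tanh (α * v)) - v * Real.tanh (α * v + h) - v * Real.tanh (α * v - h)
      ≤ 2 * α * (v ^ 2 * h ^ 2) := by
  set x := α * v with hx
  set c := Real.cosh x ^ 2 with hc
  set s := Real.sinh h ^ 2 with hs
  have hc1 : 1 ≤ c := by
    have := Real.one_le_cosh x
    nlinarith
  have hs0 : 0 ≤ s := sq_nonneg _
  have hcs : 0 < c + s := by linarith
  have hA0 : 0 ≤ v * Real.tanh x := mul_tanh_nonneg α v hα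
  have hA1 : v * Real.tanh x ≤ α * v ^ 2 := mul_tanh_le α v hα
  have e : v * Real.tanh (x + h) + v * Real.tanh (x - h)
      = 2 * (v * Real.tanh x) * (c / (c + s)) := by
    have := tanh_id_key x h
    have e2 : v * (Real.tanh (x + h) + Real.tanh (x - h))
        = v * (2 * Real.tanh x * c / (c + s)) := by rw [this]
    field_simp at e2 ⊢
    linarith [e2]
  have hfrac0 : 0 ≤ c / (c + s) := by positivity
  have hfrac1 : c / (c + s) ≤ 1 := by
    rw [div_le_one hcs]; linarith
  have hfrac2 : 1 - c / (c + s) = s / (c + s) := by field_simp; ring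
  have hfrac3 : s / (c + s) ≤ h ^ 2 := by
    rw [div_le_iff₀ hcs]
    have h1 : s ≤ h ^ 2 * Real.cosh h ^ 2 := sinh_sq_le h
    have h2 : Real.cosh h ^ 2 = 1 + s := by
      rw [hs, Real.cosh_sq]; ring
    nlinarith [sq_nonneg h]
  constructor
  · have : 2 * (v * Real.tanh x) - v * Real.tanh (x + h) - v * Real.tanh (x - h)
        = 2 * (v * Real.tanh x) * (1 - c / (c + s)) := by linear_combination (-1 : ℝ) * e
    rw [this]
    have : 0 ≤ 1 - c / (c + s) := by linarith
    positivity
  · have heq : 2 * (v * Real.tanh x) - v * Real.tanh (x + h) - v * Real.tanh (x - h)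
        = 2 * (v * Real.tanh x) * (s / (c + s)) := by linear_combination (-1 : ℝ) * e + (2 * (v * Real.tanh x)) * hfrac2
    rw [heq]
    have hsf : 0 ≤ s / (c + s) := by positivity
    calc 2 * (v * Real.tanh x) * (s / (c + s))
        ≤ 2 * (α * v ^ 2) * (h ^ 2) := by
          apply mul_le_mul (by linarith) hfrac3 hsf (by positivity)
      _ = 2 * α * (v ^ 2 * h ^ 2) := by ring


lemma integrable_sq_exp : Integrable (fun y : ℝ => y ^ 2 * rexp (-(2⁻¹ : ℝ) * y ^ 2)) := by
  have h := integrable_rpow_mul_exp_neg_mul_sq (b := (2⁻¹ : ℝ)) (by norm_num) (s := 2) (by norm_num)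
  have e : ∀ y : ℝ, y ^ (2 : ℝ) = y ^ 2 := fun y => by
    rw [show (2 : ℝ) = ((2 : ℕ) : ℝ) by norm_num, Real.rpow_natCast]
  simpa [e] using h

lemma integrable_exp_half : Integrable (fun y : ℝ => rexp (-(2⁻¹ : ℝ) * y ^ 2)) :=
  integrable_exp_neg_mul_sq (by norm_num)

lemma integrable_mul_exp_half : Integrable (fun y : ℝ => y * rexp (-(2⁻¹ : ℝ) * y ^ 2)) :=
  integrable_mul_exp_neg_mul_sq (by norm_num)

lemma integral_mul_exp_half : ∫ y : ℝ, y * rexp (-(2⁻¹ : ℝ) * y ^ 2) = 0 := by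
  have hd : ∀ y : ℝ, HasDerivAt (fun y : ℝ => -rexp (-(2⁻¹ : ℝ) * y ^ 2))
      (y * rexp (-(2⁻¹ : ℝ) * y ^ 2)) y := by
    intro y
    have h1 : HasDerivAt (fun y : ℝ => -(2⁻¹ : ℝ) * y ^ 2) (-(2⁻¹ : ℝ) * (2 * y)) y := by
      simpa using ((hasDerivAt_pow 2 y).const_mul (-(2⁻¹ : ℝ)))
    have h2 := (h1.exp).neg
    refine h2.congr_deriv ?_
    ring
  exact integral_eq_zero_of_hasDerivAt_of_integrable hd integrable_mul_exp_half
    integrable_exp_half.neg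

lemma integral_sq_exp_half :
    ∫ y : ℝ, y ^ 2 * rexp (-(2⁻¹ : ℝ) * y ^ 2) = Real.sqrt (2 * π) := by
  have hd : ∀ y : ℝ, HasDerivAt (fun y : ℝ => -(y * rexp (-(2⁻¹ : ℝ) * y ^ 2)))
      (y ^ 2 * rexp (-(2⁻¹ : ℝ) * y ^ 2) - rexp (-(2⁻¹ : ℝ) * y ^ 2)) y := by
    intro y
    have h1 : HasDerivAt (fun y : ℝ => -(2⁻¹ : ℝ) * y ^ 2) (-(2⁻¹ : ℝ) * (2 * y)) y := by
      simpa using ((hasDerivAt_pow 2 y).const_mul (-(2⁻¹ : ℝ)))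
    have h2 := ((hasDerivAt_id y).mul h1.exp).neg
    refine h2.congr_deriv ?_
    simp only [id_eq]
    ring
  have hzero := integral_eq_zero_of_hasDerivAt_of_integrable hd
    (integrable_sq_exp.sub integrable_exp_half) integrable_mul_exp_half.neg
  rw [integral_sub integrable_sq_exp integrable_exp_half, sub_eq_zero] at hzero
  rw [hzero, integral_gaussian]
  congr 1
  field_simp

lemma integral_exp_half : ∫ y : ℝ, rexp (-(2⁻¹ : ℝ) * y ^ 2) = Real.sqrt (2 * π) := by
  rw [integral_gaussian]
  congr 1
  field_simp

lemma gaussianPDFReal_one_eq (m : ℝ) :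
    gaussianPDFReal m 1
      = fun x => (Real.sqrt (2 * π))⁻¹ * rexp (-(2⁻¹ : ℝ) * (x - m) ^ 2) := by
  ext x
  rw [gaussianPDFReal]
  simp only [NNReal.coe_one, mul_one]
  congr 1
  ring

lemma integrable_pdf_mul_sq (m : ℝ) :
    Integrable (fun x : ℝ => gaussianPDFReal m 1 x * x ^ 2) := by
  rw [gaussianPDFReal_one_eq]
  set c : ℝ := (Real.sqrt (2 * π))⁻¹ with hc
  have h1 : Integrable (fun y : ℝ =>
      c * (y ^ 2 * rexp (-(2⁻¹ : ℝ) * y ^ 2)) + ((2 * m * c) * (y * rexp (-(2⁻¹ : ℝ) * y ^ 2))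
        + (m ^ 2 * c) * rexp (-(2⁻¹ : ℝ) * y ^ 2))) :=
    (integrable_sq_exp.const_mul c).add
      ((integrable_mul_exp_half.const_mul (2 * m * c)).add
        (integrable_exp_half.const_mul (m ^ 2 * c)))
  have h2 : Integrable (fun y : ℝ => c * rexp (-(2⁻¹ : ℝ) * y ^ 2) * (y + m) ^ 2) :=
    h1.congr (ae_of_all _ fun y => by ring)
  have h3 := h2.comp_sub_right m
  exact h3.congr (ae_of_all _ fun x => by simp only; ring_nf)

lemma integral_pdf_mul_sq (m : ℝ) :
    ∫ x : ℝ, gaussianPDFReal m 1 x * x ^ 2 = 1 + m ^ 2 := by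
  rw [gaussianPDFReal_one_eq]
  set c : ℝ := (Real.sqrt (2 * π))⁻¹ with hc
  have hsqrtpos : (0 : ℝ) < Real.sqrt (2 * π) := Real.sqrt_pos.2 (by positivity)
  calc ∫ x : ℝ, c * rexp (-(2⁻¹ : ℝ) * (x - m) ^ 2) * x ^ 2
      = ∫ x : ℝ, (fun y => c * rexp (-(2⁻¹ : ℝ) * y ^ 2) * (y + m) ^ 2) (x - m) := by
        congr 1; ext x; simp only; ring_nf
    _ = ∫ y : ℝ, c * rexp (-(2⁻¹ : ℝ) * y ^ 2) * (y + m) ^ 2 :=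
        integral_sub_right_eq_self (μ := volume)
          (fun y => c * rexp (-(2⁻¹ : ℝ) * y ^ 2) * (y + m) ^ 2) m
    _ = ∫ y : ℝ, (c * (y ^ 2 * rexp (-(2⁻¹ : ℝ) * y ^ 2))
          + ((2 * m * c) * (y * rexp (-(2⁻¹ : ℝ) * y ^ 2))
            + (m ^ 2 * c) * rexp (-(2⁻¹ : ℝ) * y ^ 2))) := by
        congr 1; ext y; ring
    _ = c * Real.sqrt (2 * π) + (2 * m * c * 0 + m ^ 2 * c * Real.sqrt (2 * π)) := by
        have h23 : Integrable (fun y : ℝ => (2 * m * c) * (y * rexp (-(2⁻¹ : ℝ) * y ^ 2))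
            + (m ^ 2 * c) * rexp (-(2⁻¹ : ℝ) * y ^ 2)) volume :=
          (integrable_mul_exp_half.const_mul (2 * m * c)).add
            (integrable_exp_half.const_mul (m ^ 2 * c))
        rw [integral_add (integrable_sq_exp.const_mul c) h23,
          integral_add (integrable_mul_exp_half.const_mul (2 * m * c))
            (integrable_exp_half.const_mul (m ^ 2 * c)),
          integral_const_mul, integral_const_mul, integral_const_mul,
          integral_sq_exp_half, integral_mul_exp_half, integral_exp_half]
    _ = 1 + m ^ 2 := by
        have hone : c * Real.sqrt (2 * π) = 1 := inv_mul_cancel₀ hsqrtpos.ne'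
        linear_combination (1 + m ^ 2) * hone

lemma gaussianReal_one_eq_withDensity (m : ℝ) :
    gaussianReal m 1
      = volume.withDensity (fun x => ((gaussianPDFReal m 1 x).toNNReal : ℝ≥0∞)) := by
  rw [gaussianReal_of_var_ne_zero m one_ne_zero]
  rfl

lemma integrable_sq_gaussianReal (m : ℝ) :
    Integrable (fun x : ℝ => x ^ 2) (gaussianReal m 1) := by
  rw [gaussianReal_one_eq_withDensity]
  refine (integrable_withDensity_iff_integrable_smul
    ((measurable_gaussianPDFReal m 1).real_toNNReal)).2 ?_
  refine (integrable_pdf_mul_sq m).congr (ae_of_all _ fun x => ?_)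
  simp [NNReal.smul_def, Real.coe_toNNReal _ (gaussianPDFReal_nonneg m 1 x)]

lemma integral_sq_gaussianReal (m : ℝ) :
    ∫ x : ℝ, x ^ 2 ∂(gaussianReal m 1) = 1 + m ^ 2 := by
  rw [gaussianReal_one_eq_withDensity,
    integral_withDensity_eq_integral_smul ((measurable_gaussianPDFReal m 1).real_toNNReal)
      (fun x => x ^ 2), ← integral_pdf_mul_sq m]
  congr 1
  ext x
  simp [NNReal.smul_def, Real.coe_toNNReal _ (gaussianPDFReal_nonneg m 1 x)]

instance mixG_isProb (s : ℝ) : IsProbabilityMeasure (mixG s) := by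
  constructor
  simp only [mixG, Measure.add_apply, Measure.smul_apply, measure_univ, smul_eq_mul, mul_one]
  rw [ENNReal.add_halves]

lemma integrable_mixG {s : ℝ} {f : ℝ → ℝ} (h1 : Integrable f (gaussianReal (-s) 1))
    (h2 : Integrable f (gaussianReal s 1)) : Integrable f (mixG s) := by
  unfold mixG
  exact (h1.smul_measure (by norm_num)).add_measure (h2.smul_measure (by norm_num))

lemma integral_mixG {s : ℝ} {f : ℝ → ℝ} (h1 : Integrable f (gaussianReal (-s) 1))
    (h2 : Integrable f (gaussianReal s 1)) :
    ∫ x, f x ∂(mixG s)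
      = 2⁻¹ * ∫ x, f x ∂(gaussianReal (-s) 1) + 2⁻¹ * ∫ x, f x ∂(gaussianReal s 1) := by
  unfold mixG
  rw [integral_add_measure (h1.smul_measure (by norm_num)) (h2.smul_measure (by norm_num)),
    integral_smul_measure, integral_smul_measure]
  norm_num

lemma integrable_sq_mixG (s : ℝ) : Integrable (fun x : ℝ => x ^ 2) (mixG s) :=
  integrable_mixG (integrable_sq_gaussianReal _) (integrable_sq_gaussianReal _)

lemma integral_sq_mixG (s : ℝ) : ∫ x, x ^ 2 ∂(mixG s) = 1 + s ^ 2 := by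
  rw [integral_mixG (integrable_sq_gaussianReal _) (integrable_sq_gaussianReal _),
    integral_sq_gaussianReal, integral_sq_gaussianReal, neg_sq]
  ring

lemma integrable_id_mixG (s : ℝ) : Integrable (fun x : ℝ => x) (mixG s) := by
  refine Integrable.mono' ((integrable_const 1).add (integrable_sq_mixG s))
    aestronglyMeasurable_id (ae_of_all _ fun x => ?_)
  simp only [Real.norm_eq_abs, Pi.add_apply]
  nlinarith [sq_nonneg (|x| - 1), sq_abs x, abs_nonneg x]

lemma gaussianReal_map_neg : (gaussianReal 0 1).map (fun x : ℝ => -x) = gaussianReal 0 1 := by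
  have h := gaussianReal_map_const_mul (μ := 0) (v := 1) (-1)
  have e : (fun x : ℝ => -1 * x) = (fun x : ℝ => -x) := by ext x; ring
  rw [e] at h
  convert h using 2
  · norm_num
  · ext : 1
    norm_num

lemma continuous_tanh' : Continuous Real.tanh := by
  have e : Real.tanh = fun x => Real.sinh x / Real.cosh x := funext Real.tanh_eq_sinh_div_cosh
  rw [e]
  exact Real.continuous_sinh.div Real.continuous_cosh fun x => (Real.cosh_pos x).ne'

lemma abs_tanh_le_one (y : ℝ) : |Real.tanh y| ≤ 1 := by
  rw [Real.tanh_eq_sinh_div_cosh, abs_div, abs_of_pos (Real.cosh_pos y),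
    div_le_one (Real.cosh_pos y)]
  nlinarith [Real.cosh_sq y, sq_abs (Real.sinh y), abs_nonneg (Real.sinh y), Real.cosh_pos y]

lemma int_fst (s : ℝ) : Integrable (fun p : ℝ × ℝ => p.1) (Measure.prod (mixG s) (gaussianReal 0 1)) := by
  have h := (integrable_id_mixG s).mul_prod (integrable_const (1 : ℝ)
    (μ := gaussianReal 0 1))
  simpa using h

lemma int_tanh (s α β : ℝ) : Integrable (fun p : ℝ × ℝ => p.1 * Real.tanh (α * p.1 + β * p.2)) (Measure.prod (mixG s) (gaussianReal 0 1)) := by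
  refine Integrable.mono' (int_fst s).abs ?_ (ae_of_all _ fun p => ?_)
  · exact Continuous.aestronglyMeasurable (by
      exact continuous_fst.mul (continuous_tanh'.comp
        ((continuous_const.mul continuous_fst).add (continuous_const.mul continuous_snd))))
  · rw [Real.norm_eq_abs, abs_mul]
    calc |p.1| * |Real.tanh (α * p.1 + β * p.2)| ≤ |p.1| * 1 :=
          mul_le_mul_of_nonneg_left (abs_tanh_le_one _) (abs_nonneg _)
      _ = |p.1| := mul_one _

lemma int_sqprod (s : ℝ) : Integrable (fun p : ℝ × ℝ => p.1 ^ 2 * p.2 ^ 2) (Measure.prod (mixG s) (gaussianReal 0 1)) :=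
  (integrable_sq_mixG s).mul_prod (integrable_sq_gaussianReal 0)


end StmtAux

/-- With `f(α) = F(α,0)`: for `α ≥ 0` and `β ≥ 0`,
`f(α) − (1 + s²)·α·β² ≤ F(α,β) ≤ f(α)`. -/
theorem stmt_14 (s α β : ℝ) (hα : 0 ≤ α) (hβ : 0 ≤ β) :
    Fmap s α 0 - (1 + s ^ 2) * α * β ^ 2 ≤ Fmap s α β ∧ Fmap s α β ≤ Fmap s α 0 := by
  have intF0 : Integrable (fun p : ℝ × ℝ => p.1 * Real.tanh (α * p.1)) (Measure.prod (mixG s) (gaussianReal 0 1)) := by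
    simpa using int_tanh s α 0
  have intFb := int_tanh s α β
  have intFb' : Integrable (fun p : ℝ × ℝ => p.1 * Real.tanh (α * p.1 - β * p.2)) (Measure.prod (mixG s) (gaussianReal 0 1)) := by
    have h := int_tanh s α (-β)
    refine h.congr (ae_of_all _ fun p => ?_)
    ring_nf
  have hF0 : Fmap s α 0 = ∫ p : ℝ × ℝ, p.1 * Real.tanh (α * p.1) ∂(Measure.prod (mixG s) (gaussianReal 0 1)) := by
    unfold Fmap
    norm_num
  -- symmetry
  have hsym : (∫ p : ℝ × ℝ, p.1 * Real.tanh (α * p.1 - β * p.2) ∂(Measure.prod (mixG s) (gaussianReal 0 1))) = Fmap s α β := by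
    have hMPneg : MeasurePreserving (fun x : ℝ => -x) (gaussianReal 0 1) (gaussianReal 0 1) :=
      ⟨measurable_neg, gaussianReal_map_neg⟩
    have hMP : MeasurePreserving (fun p : ℝ × ℝ => (p.1, -p.2)) (Measure.prod (mixG s) (gaussianReal 0 1)) (Measure.prod (mixG s) (gaussianReal 0 1)) := by
      have h := (MeasurePreserving.id (mixG s)).prod hMPneg
      have e : (Prod.map (id : ℝ → ℝ) (fun x : ℝ => -x)) = fun p : ℝ × ℝ => (p.1, -p.2) := by
        ext p <;> simp [Prod.map]
      rwa [e] at h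
    have hT : MeasurableEmbedding (fun p : ℝ × ℝ => (p.1, -p.2)) := by
      have h2 := ((MeasurableEquiv.refl ℝ).prodCongr (MeasurableEquiv.neg ℝ)).measurableEmbedding
      have e : ⇑((MeasurableEquiv.refl ℝ).prodCongr (MeasurableEquiv.neg ℝ))
          = fun p : ℝ × ℝ => (p.1, -p.2) := by
        ext p <;> rfl
      rwa [e] at h2
    have h := hMP.integral_comp hT (fun p : ℝ × ℝ => p.1 * Real.tanh (α * p.1 + β * p.2))
    rw [Fmap, ← h]
    congr 1
    ext p
    ring_nf
  -- the integral of the defect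
  set D : ℝ × ℝ → ℝ := fun p => 2 * (p.1 * Real.tanh (α * p.1))
      - p.1 * Real.tanh (α * p.1 + β * p.2) - p.1 * Real.tanh (α * p.1 - β * p.2) with hD
  have intD : Integrable D (Measure.prod (mixG s) (gaussianReal 0 1)) := ((intF0.const_mul 2).sub intFb).sub intFb'
  have hDval : (∫ p, D p ∂(Measure.prod (mixG s) (gaussianReal 0 1))) = 2 * (Fmap s α 0 - Fmap s α β) := by
    rw [hD]
    have i1 : Integrable (fun p : ℝ × ℝ => 2 * (p.1 * Real.tanh (α * p.1))) (Measure.prod (mixG s) (gaussianReal 0 1)) :=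
      intF0.const_mul 2
    have i12 : Integrable (fun p : ℝ × ℝ =>
        2 * (p.1 * Real.tanh (α * p.1)) - p.1 * Real.tanh (α * p.1 + β * p.2)) (Measure.prod (mixG s) (gaussianReal 0 1)) :=
      i1.sub intFb
    rw [integral_sub i12 intFb', integral_sub i1 intFb, integral_const_mul, hsym, ← hF0]
    have : Fmap s α β = ∫ p : ℝ × ℝ, p.1 * Real.tanh (α * p.1 + β * p.2) ∂(Measure.prod (mixG s) (gaussianReal 0 1)) := rfl
    rw [← this]
    ring
  have h0 : 0 ≤ ∫ p, D p ∂(Measure.prod (mixG s) (gaussianReal 0 1)) := by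
    refine integral_nonneg fun p => ?_
    have := (pointwise_bounds α p.1 (β * p.2) hα).1
    simpa [hD] using this
  have h1 : (∫ p, D p ∂(Measure.prod (mixG s) (gaussianReal 0 1))) ≤ 2 * α * β ^ 2 * (1 + s ^ 2) := by
    have hble : ∀ p : ℝ × ℝ, D p ≤ (2 * α * β ^ 2) * (p.1 ^ 2 * p.2 ^ 2) := by
      intro p
      have := (pointwise_bounds α p.1 (β * p.2) hα).2
      simp only [hD]
      nlinarith [this]
    have hmono := integral_mono intD ((int_sqprod s).const_mul (2 * α * β ^ 2)) hble
    calc (∫ p, D p ∂(Measure.prod (mixG s) (gaussianReal 0 1))) ≤ ∫ p : ℝ × ℝ, (2 * α * β ^ 2) * (p.1 ^ 2 * p.2 ^ 2) ∂(Measure.prod (mixG s) (gaussianReal 0 1)) := hmono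
      _ = (2 * α * β ^ 2) * ∫ p : ℝ × ℝ, p.1 ^ 2 * p.2 ^ 2 ∂(Measure.prod (mixG s) (gaussianReal 0 1)) := integral_const_mul _ _
      _ = (2 * α * β ^ 2) * ((1 + s ^ 2) * (1 + 0 ^ 2)) := by
          rw [integral_prod_mul (fun v : ℝ => v ^ 2) (fun w : ℝ => w ^ 2),
            integral_sq_mixG, integral_sq_gaussianReal]
      _ = 2 * α * β ^ 2 * (1 + s ^ 2) := by ring
  rw [hDval] at h0 h1
  constructor <;> nlinarith [h0, h1]
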